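/- (Equation (BNZ)) For every GPOVM M and all g g' : G, D_pt (M_g) g' = D_pt M (g * g'), where the risks of the twisted GPOVM M_g are defined through the measures ν (M_g) g' in the same way as for M. -/

import Mathlib

open MeasureTheory
open scoped Kronecker Matrix ComplexOrder

noncomputable section

namespace GroupEstimation

variable {G : Type} [Group G] [TopologicalSpace G] [IsTopologicalGroup G]
  [CompactSpace G] [T2Space G] [MeasurableSpace G] [BorelSpace G]

/-- Vectorization of a square matrix. -/
def vec {d : ℕ} (A : Matrix (Fin d) (Fin d) ℂ) : EuclideanSpace ℂ (Fin d × Fin d) :=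
  WithLp.toLp 2 (fun p => A p.1 p.2)

/-- The rank-one state `|f(g)⟩⟩⟨⟨f(g)|`. -/
def rho {d : ℕ} (f : G → Matrix (Fin d) (Fin d) ℂ) (g : G) :
    Matrix (Fin d × Fin d) (Fin d × Fin d) ℂ :=
  fun p q => f g p.1 p.2 * star (f g q.1 q.2)

/-- `A g = f g ⊗ₖ 1`. -/
def Amat {d : ℕ} (f : G → Matrix (Fin d) (Fin d) ℂ) (g : G) :
    Matrix (Fin d × Fin d) (Fin d × Fin d) ℂ :=
  f g ⊗ₖ (1 : Matrix (Fin d) (Fin d) ℂ)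

/-- The average state `ρμ` (entrywise Bochner integral). -/
def rhoMu (μ : Measure G) {d : ℕ} (f : G → Matrix (Fin d) (Fin d) ℂ) :
    Matrix (Fin d × Fin d) (Fin d × Fin d) ℂ :=
  fun p q => ∫ g, rho f g p q ∂μ

/-- positivity, vanishing at ∅ and countable additivity (the "measure part" of a GPOVM). -/
def IsPreGPOVM {d : ℕ} (M : Set G → Matrix (Fin d × Fin d) (Fin d × Fin d) ℂ) : Prop :=
  (∀ B : Set G, MeasurableSet B → (M B).PosSemidef) ∧ M ∅ = 0 ∧
    ∀ B : ℕ → Set G, (∀ j, MeasurableSet (B j)) → Pairwise (Function.onFun Disjoint B) →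
      M (⋃ j, B j) = ∑' j, M (B j)

/-- Generalized POVM. -/
def IsGPOVM (μ : Measure G) {d : ℕ} (f : G → Matrix (Fin d) (Fin d) ℂ)
    (M : Set G → Matrix (Fin d × Fin d) (Fin d × Fin d) ℂ) : Prop :=
  IsPreGPOVM M ∧ (M Set.univ * rhoMu μ f).trace = 1

/-- Covariance of a GPOVM. -/
def IsCovariant {d : ℕ} (f : G → Matrix (Fin d) (Fin d) ℂ)
    (M : Set G → Matrix (Fin d × Fin d) (Fin d × Fin d) ℂ) : Prop :=
  ∀ (g : G) (B : Set G), MeasurableSet B →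
    M ((g * ·) '' B) = Amat f g * M B * (Amat f g)ᴴ

/-- The covariant GPOVM with seed `T`. -/
def MT (μ : Measure G) {d : ℕ} (f : G → Matrix (Fin d) (Fin d) ℂ)
    (T : Matrix (Fin d × Fin d) (Fin d × Fin d) ℂ) (B : Set G) :
    Matrix (Fin d × Fin d) (Fin d × Fin d) ℂ :=
  fun p q => ∫ g in B, (Amat f g * T * (Amat f g)ᴴ) p q ∂μ

/-- Pointwise risk. -/
def Dpt {d : ℕ} (w : G → G → ℝ)
    (ν : (Set G → Matrix (Fin d × Fin d) (Fin d × Fin d) ℂ) → G → Measure G)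
    (M : Set G → Matrix (Fin d × Fin d) (Fin d × Fin d) ℂ) (g : G) : ℝ :=
  ∫ gh, w g gh ∂(ν M g)

/-- Bayes risk. -/
def Dbayes (μ : Measure G) {d : ℕ} (w : G → G → ℝ)
    (ν : (Set G → Matrix (Fin d × Fin d) (Fin d × Fin d) ℂ) → G → Measure G)
    (M : Set G → Matrix (Fin d × Fin d) (Fin d × Fin d) ℂ) : ℝ :=
  ∫ g, Dpt w ν M g ∂μ

/-- Minimax risk. -/
def Dmax {d : ℕ} (w : G → G → ℝ)
    (ν : (Set G → Matrix (Fin d × Fin d) (Fin d × Fin d) ℂ) → G → Measure G)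
    (M : Set G → Matrix (Fin d × Fin d) (Fin d × Fin d) ℂ) : ℝ :=
  ⨆ g : G, Dpt w ν M g

/-- Twisted GPOVM `M_g`. -/
def twist {d : ℕ} (f : G → Matrix (Fin d) (Fin d) ℂ)
    (M : Set G → Matrix (Fin d × Fin d) (Fin d × Fin d) ℂ) (g : G) (B : Set G) :
    Matrix (Fin d × Fin d) (Fin d × Fin d) ℂ :=
  (Amat f g)ᴴ * M ((g * ·) '' B) * Amat f g

/-- Matrix of the orthogonal projection onto span {v g}. -/
def P0 {d : ℕ} (f : G → Matrix (Fin d) (Fin d) ℂ) :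
    Matrix (Fin d × Fin d) (Fin d × Fin d) ℂ :=
  Matrix.toEuclideanLin.symm
    ((Submodule.span ℂ (Set.range fun g => vec (f g))).subtype ∘ₗ
      (Submodule.orthogonalProjectionOnto (Submodule.span ℂ (Set.range fun g => vec (f g)))).toLinearMap)


set_option linter.unusedSectionVars false

lemma kron_conjT {d : ℕ} (X : Matrix (Fin d) (Fin d) ℂ) :
    (X ⊗ₖ (1 : Matrix (Fin d) (Fin d) ℂ))ᴴ = Xᴴ ⊗ₖ (1 : Matrix (Fin d) (Fin d) ℂ) := by
  ext p q
  simp [Matrix.conjTranspose_apply, Matrix.kroneckerMap_apply, Matrix.one_apply]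
  by_cases h : p.2 = q.2
  · simp [h]
  · simp [h, Ne.symm h]

lemma Amat_unitary {d : ℕ} (f : G → Matrix (Fin d) (Fin d) ℂ)
    (hf : ∀ g : G, f g ∈ Matrix.unitaryGroup (Fin d) ℂ) (g : G) :
    (Amat f g)ᴴ * Amat f g = 1 ∧ Amat f g * (Amat f g)ᴴ = 1 := by
  have h := hf g
  rw [Matrix.mem_unitaryGroup_iff'] at h
  have h2 := hf g
  rw [Matrix.mem_unitaryGroup_iff] at h2
  rw [Matrix.star_eq_conjTranspose] at h h2
  constructor
  · rw [Amat, kron_conjT, ← Matrix.mul_kronecker_mul, h, Matrix.one_mul,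
      Matrix.one_kronecker_one]
  · rw [Amat, kron_conjT, ← Matrix.mul_kronecker_mul, h2, Matrix.one_mul,
      Matrix.one_kronecker_one]

lemma conj_rank_one {I : Type} [Fintype I] (A : Matrix I I ℂ) (v : I → ℂ) :
    A * (Matrix.of fun p q => v p * star (v q)) * Aᴴ =
      Matrix.of fun p q => (A *ᵥ v) p * star ((A *ᵥ v) q) := by
  ext p q
  simp only [Matrix.mul_apply, Matrix.of_apply, Matrix.mulVec, dotProduct,
    Matrix.conjTranspose_apply, star_sum, star_mul', Finset.sum_mul, Finset.mul_sum]
  refine Finset.sum_congr rfl fun s _ => Finset.sum_congr rfl fun r _ => by ring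

lemma Amat_mulVec {d : ℕ} (f : G → Matrix (Fin d) (Fin d) ℂ) (g : G)
    (X : Matrix (Fin d) (Fin d) ℂ) :
    Amat f g *ᵥ vec X = vec (f g * X) := by
  funext p
  simp [Amat, Matrix.mulVec, dotProduct, vec, Matrix.kroneckerMap_apply,
    Matrix.one_apply, Fintype.sum_prod_type, Matrix.mul_apply, ite_mul, mul_ite,
    mul_assoc]

lemma conj_rho {d : ℕ} (f : G → Matrix (Fin d) (Fin d) ℂ)
    (c : G → G → ℂ) (hc_norm : ∀ g h : G, ‖c g h‖ = 1)
    (hc_proj : ∀ g h : G, f (g * h) = c g h • (f g * f h)) (g g' : G) :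
    Amat f g * rho f g' * (Amat f g)ᴴ = rho f (g * g') := by
  have hcc : star (c g g') * c g g' = 1 := by
    have h := hc_norm g g'
    rw [Complex.star_def, ← Complex.normSq_eq_conj_mul_self,
      Complex.normSq_eq_norm_sq, h]
    norm_num
  have hX : f g * f g' = star (c g g') • f (g * g') := by
    rw [hc_proj g g', smul_smul, hcc, one_smul]
  have h1 : rho f g' = Matrix.of fun p q => vec (f g') p * star (vec (f g') q) := rfl
  rw [h1, conj_rank_one, Amat_mulVec]
  ext p q
  simp only [Matrix.of_apply, vec, hX, rho, Matrix.smul_apply, smul_eq_mul,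
    star_mul', star_star]
  linear_combination (f (g * g') p.1 p.2 * star (f (g * g') q.1 q.2)) * hcc

/-- Conjugation by a unitary as a continuous linear equivalence. -/
def conjCLE {I : Type} [Fintype I] [DecidableEq I] (A : Matrix I I ℂ)
    (h1 : Aᴴ * A = 1) (h2 : A * Aᴴ = 1) :
    Matrix I I ℂ ≃L[ℂ] Matrix I I ℂ :=
  LinearEquiv.toContinuousLinearEquiv
  { toFun := fun X => Aᴴ * X * A
    map_add' := fun X Y => by simp only [Matrix.mul_add, Matrix.add_mul]
    map_smul' := fun r X => by
      simp [Matrix.mul_smul, Matrix.smul_mul]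
    invFun := fun X => A * X * Aᴴ
    left_inv := fun X => by
      calc A * (Aᴴ * X * A) * Aᴴ = (A * Aᴴ) * X * (A * Aᴴ) := by
            simp only [Matrix.mul_assoc]
        _ = X := by rw [h2, Matrix.one_mul, Matrix.mul_one]
    right_inv := fun X => by
      calc Aᴴ * (A * X * Aᴴ) * A = (Aᴴ * A) * X * (Aᴴ * A) := by
            simp only [Matrix.mul_assoc]
        _ = X := by rw [h1, Matrix.one_mul, Matrix.mul_one] }

lemma twist_pre {d : ℕ} (f : G → Matrix (Fin d) (Fin d) ℂ)
    (hf : ∀ g : G, f g ∈ Matrix.unitaryGroup (Fin d) ℂ)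
    (M : Set G → Matrix (Fin d × Fin d) (Fin d × Fin d) ℂ)
    (hM : IsPreGPOVM M) (g : G) : IsPreGPOVM (twist f M g) := by
  obtain ⟨hpos, hempty, hadd⟩ := hM
  obtain ⟨hA1, hA2⟩ := Amat_unitary f hf g
  have himg : ∀ B : Set G, MeasurableSet B → MeasurableSet ((g * ·) '' B) := by
    intro B hB
    rw [Set.image_mul_left]
    exact hB.preimage (measurable_const_mul g⁻¹)
  refine ⟨fun B hB => ?_, ?_, fun B hBm hBd => ?_⟩
  · exact Matrix.PosSemidef.conjTranspose_mul_mul_same (hpos _ (himg B hB)) (Amat f g)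
  · simp [twist, hempty]
  · have himgU : (g * ·) '' (⋃ j, B j) = ⋃ j, (g * ·) '' B j := Set.image_iUnion
    have hdisj : Pairwise (Function.onFun Disjoint fun j => (g * ·) '' B j) := fun i j hij =>
      Set.disjoint_image_of_injective (mul_right_injective g) (hBd hij)
    have hMU : M ((g * ·) '' ⋃ j, B j) = ∑' j, M ((g * ·) '' B j) := by
      rw [himgU]
      exact hadd _ (fun j => himg _ (hBm j)) hdisj
    calc twist f M g (⋃ j, B j)
        = conjCLE (Amat f g) hA1 hA2 (∑' j, M ((g * ·) '' B j)) := by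
          rw [twist, hMU]; rfl
      _ = ∑' j, conjCLE (Amat f g) hA1 hA2 (M ((g * ·) '' B j)) :=
          ContinuousLinearEquiv.map_tsum _
      _ = ∑' j, twist f M g (B j) := rfl

/-- Equation (BNZ): the pointwise risk of the twisted GPOVM. -/
theorem Dpt_twist
    {G : Type} [Group G] [TopologicalSpace G] [IsTopologicalGroup G]
    [CompactSpace G] [T2Space G] [MeasurableSpace G] [BorelSpace G]
    (μ : Measure G) [μ.IsHaarMeasure] [IsProbabilityMeasure μ]
    {d : ℕ} (hd : 0 < d) (f : G → Matrix (Fin d) (Fin d) ℂ)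
    (hf_cont : Continuous f) (hf_one : f 1 = 1)
    (hf_unitary : ∀ g : G, f g ∈ Matrix.unitaryGroup (Fin d) ℂ)
    (c : G → G → ℂ) (hc_norm : ∀ g h : G, ‖c g h‖ = 1)
    (hc_proj : ∀ g h : G, f (g * h) = c g h • (f g * f h))
    (w : G → G → ℝ) (hw_cont : Continuous fun p : G × G => w p.1 p.2)
    (hw_bdd : ∃ C : ℝ, ∀ g gh : G, |w g gh| ≤ C)
    (hw_cov : ∀ g gh g' : G, w (g' * g) (g' * gh) = w g gh)
    (ν : (Set G → Matrix (Fin d × Fin d) (Fin d × Fin d) ℂ) → G → Measure G)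
    (hν : ∀ M : Set G → Matrix (Fin d × Fin d) (Fin d × Fin d) ℂ, IsPreGPOVM M →
      ∀ (g : G) (B : Set G), MeasurableSet B →
        ν M g B = ENNReal.ofReal ((M B * rho f g).trace).re)
    (M : Set G → Matrix (Fin d × Fin d) (Fin d × Fin d) ℂ)
    (hM : IsGPOVM μ f M) (g g' : G) :
    Dpt w ν (twist f M g) g' = Dpt w ν M (g * g') := by
  have hpre := hM.1
  have hpre' := twist_pre f hf_unitary M hpre g
  have himg : ∀ B : Set G, MeasurableSet B → MeasurableSet ((g * ·) '' B) := by
    intro B hB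
    rw [Set.image_mul_left]
    exact hB.preimage (measurable_const_mul g⁻¹)
  have hmeas : ν (twist f M g) g' = Measure.map (fun h => g⁻¹ * h) (ν M (g * g')) := by
    ext B hB
    rw [Measure.map_apply (measurable_const_mul g⁻¹) hB]
    have hpre_eq : (fun h => g⁻¹ * h) ⁻¹' B = (g * ·) '' B := (Set.image_mul_left).symm
    rw [hν _ hpre' g' B hB, hpre_eq, hν M hpre (g * g') _ (himg B hB)]
    have htr : (twist f M g B * rho f g').trace
        = (M ((g * ·) '' B) * rho f (g * g')).trace := by
      rw [twist,
        show (Amat f g)ᴴ * M ((g * ·) '' B) * Amat f g * rho f g'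
          = ((Amat f g)ᴴ * M ((g * ·) '' B)) * (Amat f g * rho f g') from by
            simp [Matrix.mul_assoc],
        Matrix.trace_mul_comm,
        show Amat f g * rho f g' * ((Amat f g)ᴴ * M ((g * ·) '' B))
          = (Amat f g * rho f g' * (Amat f g)ᴴ) * M ((g * ·) '' B) from by
            simp [Matrix.mul_assoc],
        Matrix.trace_mul_comm, conj_rho f c hc_norm hc_proj]
    rw [htr]
  have hsm : AEStronglyMeasurable (fun gh => w g' gh)
      (Measure.map (fun h => g⁻¹ * h) (ν M (g * g'))) :=
    (hw_cont.comp (continuous_const.prodMk continuous_id)).aestronglyMeasurable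
  unfold Dpt
  rw [hmeas, integral_map (measurable_const_mul g⁻¹).aemeasurable hsm]
  have hfun : (fun h => w g' (g⁻¹ * h)) = fun h => w (g * g') h := by
    funext h
    have := hw_cov g' (g⁻¹ * h) g
    rw [mul_inv_cancel_left] at this
    exact this.symm
  simp only [hfun]

end GroupEstimation
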